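/- Let p be an odd prime and G a group of order p^5 such that |Z(G)| = p², the commutator subgroup G' is elementary abelian of order p², and G' is not contained in Z(G). Then the centralizer C_G(G') is an abelian subgroup of G of index p, and it is the unique abelian subgroup of G of index p. -/

import Mathlib

open Subgroup Pointwise

/-- W := commutator ⊓ center has cardinality p. -/
lemma aux_cardW {p : ℕ} (hp : p.Prime)
    {G : Type} [Group G] [Fintype G]
    (hcard : Nat.card G = p ^ 5)
    (hG'card : Nat.card (commutator G) = p ^ 2)
    (hnc : ¬ commutator G ≤ Subgroup.center G) :
    Nat.card (commutator G ⊓ Subgroup.center G : Subgroup G) = p := by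
  haveI : Fact p.Prime := ⟨hp⟩
  set W : Subgroup G := commutator G ⊓ Subgroup.center G with hW
  have hpG : IsPGroup p G := IsPGroup.of_card hcard
  -- find a nontrivial element of W
  have hWne : ∃ b : G, b ∈ W ∧ b ≠ 1 := by
    have hpC : IsPGroup p (ConjAct G) := hpG.of_equiv ConjAct.toConjAct
    have hdvd : p ∣ Nat.card (commutator G) := by
      rw [hG'card]; exact dvd_pow_self p two_ne_zero
    have h1 : (1 : (commutator G)) ∈ MulAction.fixedPoints (ConjAct G) (commutator G) := by
      intro g; exact smul_one g
    obtain ⟨b, hbfix, hbne⟩ := hpC.exists_fixed_point_of_prime_dvd_card_of_fixed_point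
      (commutator G) hdvd h1
    refine ⟨(b : G), ⟨b.2, ?_⟩, ?_⟩
    · show (b : G) ∈ Subgroup.center G
      rw [Subgroup.mem_center_iff]
      intro g
      have := hbfix (ConjAct.toConjAct g)
      have hval : ConjAct.ofConjAct (ConjAct.toConjAct g) * (b : G) *
          (ConjAct.ofConjAct (ConjAct.toConjAct g))⁻¹ = (b : G) := by
        have := congrArg (Subtype.val) this
        rwa [ConjAct.Subgroup.val_conj_smul, ConjAct.smul_def] at this
      rw [ConjAct.ofConjAct_toConjAct] at hval
      calc g * (b : G) = (g * b * g⁻¹) * g := by group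
        _ = (b : G) * g := by rw [hval]
    · intro h
      exact hbne (Subtype.ext (h.trans (rfl : (1:G) = ((1 : (commutator G)) : G)))).symm
  obtain ⟨b, hbW, hbne⟩ := hWne
  have hdvd : Nat.card W ∣ p ^ 2 := by
    rw [← hG'card]; exact Subgroup.card_dvd_of_le inf_le_left
  obtain ⟨k, hk, hcardW⟩ := (Nat.dvd_prime_pow hp).mp hdvd
  interval_cases k
  · exfalso
    rw [pow_zero, Subgroup.card_eq_one] at hcardW
    rw [hcardW] at hbW
    exact hbne hbW
  · rw [hcardW, pow_one]
  · exfalso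
    apply hnc
    have : W = commutator G := by
      apply Subgroup.eq_of_le_of_card_ge inf_le_left
      rw [hcardW, hG'card]
    rw [← this]
    exact inf_le_right

/-- decomposition of elements of the commutator subgroup -/
lemma aux_dec {p : ℕ} (hp : p.Prime)
    {G : Type} [Group G] [Fintype G]
    (hcard : Nat.card G = p ^ 5)
    (hG'card : Nat.card (commutator G) = p ^ 2)
    (hnc : ¬ commutator G ≤ Subgroup.center G)
    {a : G} (ha : a ∈ commutator G) (haZ : a ∉ Subgroup.center G)
    {x : G} (hx : x ∈ commutator G) :
    ∃ k : ℤ, ∃ w ∈ (commutator G ⊓ Subgroup.center G : Subgroup G), x = a ^ k * w := by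
  haveI : Fact p.Prime := ⟨hp⟩
  set W : Subgroup G := commutator G ⊓ Subgroup.center G with hW
  have hcardW : Nat.card W = p := aux_cardW hp hcard hG'card hnc
  set K : Subgroup G := Subgroup.zpowers a ⊔ W with hK
  have hKG' : K ≤ commutator G := sup_le (Subgroup.zpowers_le.mpr ha) inf_le_left
  have haK : a ∈ K := Subgroup.mem_sup_left (Subgroup.mem_zpowers a)
  have haW : a ∉ W := fun h => haZ h.2
  have hdvd : Nat.card K ∣ p ^ 2 := by
    rw [← hG'card]; exact Subgroup.card_dvd_of_le hKG'
  obtain ⟨k, hk, hcardK⟩ := (Nat.dvd_prime_pow hp).mp hdvd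
  have hKeq : K = commutator G := by
    interval_cases k
    · exfalso
      rw [pow_zero, Subgroup.card_eq_one] at hcardK
      rw [hcardK] at haK
      exact haW (by rw [haK]; exact one_mem W)
    · exfalso
      apply haW
      have : W = K := by
        apply Subgroup.eq_of_le_of_card_ge le_sup_right
        rw [hcardK, pow_one, hcardW]
      rw [this]; exact haK
    · apply Subgroup.eq_of_le_of_card_ge hKG'
      rw [hcardK, hG'card]
  rw [← hKeq] at hx
  have : x ∈ (Subgroup.zpowers a : Set G) * (W : Set G) := by
    rw [← Subgroup.mul_normal]
    exact hx
  obtain ⟨y, hy, w, hw, rfl⟩ := this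
  obtain ⟨j, rfl⟩ := Subgroup.mem_zpowers_iff.mp hy
  exact ⟨j, w, hw, rfl⟩

/-- key lemma: commutators [g,a] with a in G' land in W = G' ⊓ Z. -/
lemma aux_key {p : ℕ} (hp : p.Prime)
    {G : Type} [Group G] [Fintype G]
    (hcard : Nat.card G = p ^ 5)
    (hG'card : Nat.card (commutator G) = p ^ 2)
    (hG'exp : ∀ a ∈ commutator G, a ^ p = 1)
    (hnc : ¬ commutator G ≤ Subgroup.center G)
    (g a : G) (ha : a ∈ commutator G) :
    g * a * g⁻¹ * a⁻¹ ∈ (commutator G ⊓ Subgroup.center G : Subgroup G) := by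
  haveI : Fact p.Prime := ⟨hp⟩
  set W : Subgroup G := commutator G ⊓ Subgroup.center G with hWdef
  by_cases haZ : a ∈ Subgroup.center G
  · have : g * a * g⁻¹ * a⁻¹ = 1 := by
      rw [Subgroup.mem_center_iff] at haZ
      rw [haZ g]; group
    rw [this]; exact one_mem W
  · -- conjugate of a is in G'
    have hconj : g * a * g⁻¹ ∈ commutator G :=
      (Subgroup.Normal.conj_mem inferInstance a ha g)
    obtain ⟨j, w, hwW, hja⟩ := aux_dec hp hcard hG'card hnc ha haZ hconj
    have hwZ : w ∈ Subgroup.center G := hwW.2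
    have hcw : ∀ t : G, t * w = w * t := Subgroup.mem_center_iff.mp hwZ
    have haw : Commute a w := hcw a
    -- iterate conjugation
    have hiter : ∀ n : ℕ, ∃ u ∈ W, g ^ n * a * (g ^ n)⁻¹ = a ^ (j ^ n) * u := by
      intro n
      induction n with
      | zero => exact ⟨1, one_mem W, by simp⟩
      | succ n ih =>
        obtain ⟨u, huW, hu⟩ := ih
        have huZ : ∀ t : G, t * u = u * t := Subgroup.mem_center_iff.mp huW.2
        refine ⟨w ^ (j ^ n) * u, mul_mem (Subgroup.zpow_mem W hwW _) huW, ?_⟩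
        have h1 : g ^ (n + 1) * a * (g ^ (n + 1))⁻¹
            = g * (g ^ n * a * (g ^ n)⁻¹) * g⁻¹ := by group
        rw [h1, hu]
        have h2 : g * (a ^ (j ^ n) * u) * g⁻¹ = (g * a * g⁻¹) ^ (j ^ n) * u := by
          rw [conj_zpow]
          calc g * (a ^ (j ^ n) * u) * g⁻¹ = (g * a ^ (j ^ n)) * (u * g⁻¹) := by group
            _ = (g * a ^ (j ^ n)) * (g⁻¹ * u) := by rw [← huZ g⁻¹]
            _ = g * a ^ (j ^ n) * g⁻¹ * u := by group
        rw [h2, hja]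
        have h3 : (a ^ j * w) ^ (j ^ n) = (a ^ j) ^ (j ^ n) * w ^ (j ^ n) :=
          Commute.mul_zpow (haw.zpow_left j) _
        rw [h3, ← zpow_mul, ← pow_succ']
        rw [mul_assoc]
    obtain ⟨u, huW, hu⟩ := hiter (p ^ 5)
    have hg1 : g ^ (p ^ 5) = 1 := by
      rw [← hcard]; exact pow_card_eq_one'
    rw [hg1] at hu
    simp only [one_mul, inv_one, mul_one] at hu
    -- hu : a = a ^ (j ^ p ^ 5) * u
    have huval : u = a ^ (1 - j ^ (p ^ 5)) := by
      have huZ : ∀ t : G, t * u = u * t := Subgroup.mem_center_iff.mp huW.2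
      have : a ^ ((1 : ℤ)) = a ^ (j ^ (p ^ 5)) * u := by rw [zpow_one]; exact hu
      rw [sub_eq_add_neg, zpow_add]
      rw [this]
      rw [mul_assoc, ← huZ (a ^ (-j ^ (p ^ 5))), ← mul_assoc, ← zpow_add]
      simp
    -- Fermat: p ∣ j ^ (p^5) - j
    have hfermat : (p : ℤ) ∣ j ^ (p ^ 5) - j := by
      have hx : ∀ x : ZMod p, x ^ (p ^ 5) = x := by
        intro x
        have : ∀ m : ℕ, x ^ (p ^ m) = x := by
          intro m
          induction m with
          | zero => simp
          | succ n ih => rw [pow_succ, pow_mul, ih, ZMod.pow_card]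
        exact this 5
      have : ((j ^ (p ^ 5) - j : ℤ) : ZMod p) = 0 := by
        push_cast
        rw [hx]
        ring
      exact (ZMod.intCast_zmod_eq_zero_iff_dvd _ p).mp this
    obtain ⟨m, hm⟩ := hfermat
    have hap : a ^ ((p : ℤ)) = 1 := by
      rw [zpow_natCast]; exact hG'exp a ha
    have haj1 : a ^ (j - 1) ∈ W := by
      have h5 : a ^ (1 - j) ∈ W := by
        have : a ^ ((1 : ℤ) - j) = u := by
          rw [huval]
          have : (1 : ℤ) - j = (1 - j ^ (p ^ 5)) + (j ^ (p ^ 5) - j) := by ring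
          rw [this, zpow_add, hm, zpow_mul, hap, one_zpow, mul_one]
        rw [this]; exact huW
      have : a ^ (j - 1) = (a ^ ((1:ℤ) - j))⁻¹ := by
        rw [← zpow_neg]; ring_nf
      rw [this]; exact inv_mem h5
    have hfinal : g * a * g⁻¹ * a⁻¹ = a ^ (j - 1) * w := by
      rw [hja]
      have := hcw a⁻¹
      calc a ^ j * w * a⁻¹ = a ^ j * (w * a⁻¹) := by rw [mul_assoc]
        _ = a ^ j * (a⁻¹ * w) := by rw [← this]
        _ = (a ^ j * a⁻¹) * w := by rw [mul_assoc]
        _ = a ^ (j - 1) * w := by rw [zpow_sub_one]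
    rw [hfinal]
    exact mul_mem haj1 hwW

theorem stmt_3 {p : ℕ} (hp : p.Prime) (hodd : Odd p)
    {G : Type} [Group G] [Fintype G]
    (hcard : Nat.card G = p ^ 5)
    (hZcard : Nat.card (Subgroup.center G) = p ^ 2)
    (hG'card : Nat.card (commutator G) = p ^ 2)
    (hG'ab : ∀ a ∈ commutator G, ∀ b ∈ commutator G, a * b = b * a)
    (hG'exp : ∀ a ∈ commutator G, a ^ p = 1)
    (hnc : ¬ commutator G ≤ Subgroup.center G) :
    (∀ a ∈ Subgroup.centralizer (commutator G : Set G),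
      ∀ b ∈ Subgroup.centralizer (commutator G : Set G), a * b = b * a) ∧
    (Subgroup.centralizer (commutator G : Set G)).index = p ∧
    ∀ H : Subgroup G, (∀ a ∈ H, ∀ b ∈ H, a * b = b * a) → H.index = p →
      H = Subgroup.centralizer (commutator G : Set G) := by
  haveI : Fact p.Prime := ⟨hp⟩
  have hppos : 0 < p := hp.pos
  obtain ⟨a₀, ha₀G', ha₀Z⟩ := SetLike.not_le_iff_exists.mp hnc
  have key := aux_key hp hcard hG'card hG'exp hnc
  set C := Subgroup.centralizer (commutator G : Set G) with hCdef
  -- the homomorphism Φ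
  have hmul : ∀ x y : G, (x*y) * a₀ * (x*y)⁻¹ * a₀⁻¹
      = (x * a₀ * x⁻¹ * a₀⁻¹) * (y * a₀ * y⁻¹ * a₀⁻¹) := by
    intro x y
    have hcZ : ∀ t : G, t * (y * a₀ * y⁻¹ * a₀⁻¹) = (y * a₀ * y⁻¹ * a₀⁻¹) * t :=
      Subgroup.mem_center_iff.mp (key y a₀ ha₀G').2
    set c := y * a₀ * y⁻¹ * a₀⁻¹ with hc
    have h1 : y * a₀ * y⁻¹ = c * a₀ := by rw [hc]; group
    calc (x*y) * a₀ * (x*y)⁻¹ * a₀⁻¹ = x * (y * a₀ * y⁻¹) * x⁻¹ * a₀⁻¹ := by group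
      _ = x * (c * a₀) * x⁻¹ * a₀⁻¹ := by rw [h1]
      _ = (x * c) * (a₀ * x⁻¹ * a₀⁻¹) := by group
      _ = (c * x) * (a₀ * x⁻¹ * a₀⁻¹) := by rw [hcZ x]
      _ = c * (x * a₀ * x⁻¹ * a₀⁻¹) := by group
      _ = (x * a₀ * x⁻¹ * a₀⁻¹) * c := (hcZ _).symm
  set Φ : G →* G := MonoidHom.mk' (fun g => g * a₀ * g⁻¹ * a₀⁻¹) hmul with hΦ
  have hker : Φ.ker = C := by
    ext g
    rw [MonoidHom.mem_ker]
    constructor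
    · intro h
      have hga : g * a₀ * g⁻¹ = a₀ := by
        have h' : (g * a₀ * g⁻¹) * a₀⁻¹ = 1 := h
        rwa [mul_inv_eq_one] at h'
      have hcomm : Commute g a₀ := by
        show g * a₀ = a₀ * g
        calc g * a₀ = (g * a₀ * g⁻¹) * g := by group
          _ = a₀ * g := by rw [hga]
      apply Subgroup.mem_centralizer_iff.mpr
      intro x hx
      obtain ⟨k, w, hwW, rfl⟩ := aux_dec hp hcard hG'card hnc ha₀G' ha₀Z hx
      have h1 : Commute g (a₀ ^ k) := hcomm.zpow_right k
      have h2 : Commute g w := Subgroup.mem_center_iff.mp hwW.2 g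
      exact ((h1.mul_right h2).symm : (a₀ ^ k * w) * g = g * (a₀ ^ k * w))
    · intro h
      have h' := Subgroup.mem_centralizer_iff.mp h a₀ ha₀G'
      show g * a₀ * g⁻¹ * a₀⁻¹ = 1
      rw [show g * a₀ = a₀ * g from h'.symm]
      group
  have hCindex : C.index = p := by
    have h1 : C.index = Nat.card Φ.range := by rw [← hker]; exact Subgroup.index_ker Φ
    have hrange : Φ.range ≤ commutator G ⊓ Subgroup.center G := by
      rintro x ⟨g, rfl⟩
      exact key g a₀ ha₀G'
    have h2 : Nat.card Φ.range ∣ p := by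
      rw [← aux_cardW hp hcard hG'card hnc]
      exact Subgroup.card_dvd_of_le hrange
    have h3 : C ≠ ⊤ := by
      intro h
      apply hnc
      intro a ha
      rw [Subgroup.mem_center_iff]
      intro g
      have hg : g ∈ C := h ▸ Subgroup.mem_top g
      exact (Subgroup.mem_centralizer_iff.mp hg a ha).symm
    have h4 : C.index ∣ p := by rw [h1]; exact h2
    rcases hp.eq_one_or_self_of_dvd _ h4 with h | h
    · exact absurd (Subgroup.index_eq_one.mp h) h3
    · exact h
  have hcardC : Nat.card C = p ^ 4 := by
    have h := Subgroup.card_mul_index C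
    rw [hCindex, hcard] at h
    have h2 : Nat.card C * p = p ^ 4 * p := by rw [h]; ring
    exact Nat.eq_of_mul_eq_mul_right hppos h2
  have hG'index : (commutator G).index = p ^ 3 := by
    have h := Subgroup.card_mul_index (commutator G)
    rw [hG'card, hcard] at h
    have h2 : p ^ 2 * (commutator G).index = p ^ 2 * p ^ 3 := by rw [h]; ring
    exact Nat.eq_of_mul_eq_mul_left (by positivity) h2
  have hrel1 : (commutator G).relIndex (Subgroup.center G ⊔ commutator G) = p := by
    rw [Subgroup.relIndex_sup_right, ← Subgroup.inf_relIndex_right]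
    have hWle : (commutator G ⊓ Subgroup.center G) ≤ Subgroup.center G := inf_le_right
    have hcardsub :
        Nat.card ((commutator G ⊓ Subgroup.center G).subgroupOf (Subgroup.center G)) = p := by
      rw [Nat.card_congr (Subgroup.subgroupOfEquivOfLe hWle).toEquiv]
      exact aux_cardW hp hcard hG'card hnc
    have h := Subgroup.card_mul_index
      ((commutator G ⊓ Subgroup.center G).subgroupOf (Subgroup.center G))
    rw [hcardsub, hZcard] at h
    have h2 : p * ((commutator G ⊓ Subgroup.center G).subgroupOf (Subgroup.center G)).index
        = p * p := by rw [h]; ring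
    exact Nat.eq_of_mul_eq_mul_left hppos h2
  have hNindex : (Subgroup.center G ⊔ commutator G).index = p ^ 2 := by
    have h := Subgroup.relIndex_mul_index
      (le_sup_right : commutator G ≤ Subgroup.center G ⊔ commutator G)
    rw [hrel1, hG'index] at h
    have h2 : p * (Subgroup.center G ⊔ commutator G).index = p * p ^ 2 := by rw [h]; ring
    exact Nat.eq_of_mul_eq_mul_left hppos h2
  have hcardN : Nat.card (Subgroup.center G ⊔ commutator G : Subgroup G) = p ^ 3 := by
    have h := Subgroup.card_mul_index (Subgroup.center G ⊔ commutator G)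
    rw [hNindex, hcard] at h
    have h2 : Nat.card (Subgroup.center G ⊔ commutator G : Subgroup G) * p ^ 2
        = p ^ 3 * p ^ 2 := by rw [h]; ring
    exact Nat.eq_of_mul_eq_mul_right (by positivity) h2
  have hNleC : Subgroup.center G ⊔ commutator G ≤ C := by
    apply sup_le
    · intro z hz
      exact Subgroup.mem_centralizer_iff.mpr fun h _ => Subgroup.mem_center_iff.mp hz h
    · intro d hd
      exact Subgroup.mem_centralizer_iff.mpr fun x hx => hG'ab x hx d hd
  have hNneC : (Subgroup.center G ⊔ commutator G) ≠ C := by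
    intro h
    rw [h, hcardC] at hcardN
    have := Nat.pow_right_injective hp.two_le hcardN
    omega
  have hnotle : ¬ (C ≤ Subgroup.center G ⊔ commutator G) :=
    fun hle => hNneC (le_antisymm hNleC hle)
  obtain ⟨c, hcC, hcN⟩ := SetLike.not_le_iff_exists.mp hnotle
  have hKC : Subgroup.zpowers c ⊔ (Subgroup.center G ⊔ commutator G) = C := by
    set K := Subgroup.zpowers c ⊔ (Subgroup.center G ⊔ commutator G) with hKdef
    have hKleC : K ≤ C := sup_le (Subgroup.zpowers_le.mpr hcC) hNleC
    have hNK : (Subgroup.center G ⊔ commutator G) ≤ K := le_sup_right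
    have hdvd1 : Nat.card K ∣ p ^ 4 := by rw [← hcardC]; exact Subgroup.card_dvd_of_le hKleC
    obtain ⟨k, hk, hcardK⟩ := (Nat.dvd_prime_pow hp).mp hdvd1
    have hdvd2 : p ^ 3 ∣ p ^ k := by rw [← hcardK, ← hcardN]; exact Subgroup.card_dvd_of_le hNK
    have hk3 : 3 ≤ k := (Nat.pow_dvd_pow_iff_le_right hp.one_lt).mp hdvd2
    have hkne3 : k ≠ 3 := by
      intro h
      have heq : (Subgroup.center G ⊔ commutator G) = K :=
        Subgroup.eq_of_le_of_card_ge hNK (by rw [hcardK, h, hcardN])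
      apply hcN
      rw [heq]
      exact Subgroup.mem_sup_left (Subgroup.mem_zpowers c)
    have hk4 : k = 4 := by omega
    exact Subgroup.eq_of_le_of_card_ge hKleC (by rw [hcardK, hk4, hcardC])
  haveI : (Subgroup.center G ⊔ commutator G).Normal := Subgroup.sup_normal _ _
  have hdecC : ∀ x ∈ C, ∃ (k : ℤ) (z d : G),
      z ∈ Subgroup.center G ∧ d ∈ commutator G ∧ x = c ^ k * (z * d) := by
    intro x hx
    rw [← hKC] at hx
    have h1 : x ∈ (Subgroup.zpowers c : Set G)
        * ((Subgroup.center G ⊔ commutator G : Subgroup G) : Set G) := by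
      rw [← Subgroup.mul_normal]; exact hx
    obtain ⟨y, hy, n, hn, rfl⟩ := h1
    obtain ⟨k, rfl⟩ := Subgroup.mem_zpowers_iff.mp hy
    have h2 : n ∈ (Subgroup.center G : Set G) * (commutator G : Set G) := by
      rw [← Subgroup.mul_normal]; exact hn
    obtain ⟨z, hz, d, hd, rfl⟩ := h2
    exact ⟨k, z, d, hz, hd, rfl⟩
  have habC : ∀ a ∈ C, ∀ b ∈ C, a * b = b * a := by
    intro a haC b hbC
    obtain ⟨k, z, d, hz, hd, rfl⟩ := hdecC a haC
    obtain ⟨l, z', d', hz', hd', rfl⟩ := hdecC b hbC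
    have Hzc : ∀ (zc t : G), zc ∈ Subgroup.center G → Commute zc t :=
      fun zc t h => (Subgroup.mem_center_iff.mp h t).symm
    have hcd : ∀ e ∈ commutator G, Commute c e := fun e he =>
      (Subgroup.mem_centralizer_iff.mp hcC e he).symm
    have h2 : Commute (c ^ k) (z' * d') :=
      Commute.mul_right ((Hzc z' (c ^ k) hz').symm) ((hcd d' hd').zpow_left k)
    have h3 : Commute (z * d) (c ^ l) :=
      Commute.mul_left (Hzc z (c ^ l) hz) (((hcd d hd).symm).zpow_right l)
    have h4 : Commute (z * d) (z' * d') :=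
      Commute.mul_left
        (Commute.mul_right (Hzc z z' hz) (Hzc z d' hz))
        (Commute.mul_right ((Hzc z' d hz').symm) (hG'ab d hd d' hd'))
    exact Commute.mul_left
      (Commute.mul_right ((Commute.refl c).zpow_zpow k l) h2)
      (Commute.mul_right h3 h4)
  refine ⟨habC, hCindex, ?_⟩
  intro H hH hHidx
  haveI : Group.IsNilpotent G := (IsPGroup.of_card hcard).isNilpotent
  have hcoatom : IsCoatom H := by
    constructor
    · intro h
      rw [h, Subgroup.index_top] at hHidx
      exact hp.one_lt.ne' hHidx.symm
    · intro K hHK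
      have hle : H ≤ K := le_of_lt hHK
      have h := Subgroup.relIndex_mul_index hle
      rw [hHidx] at h
      have hdvd : K.index ∣ p := Dvd.intro_left _ h
      rcases hp.eq_one_or_self_of_dvd _ hdvd with h1 | h1
      · exact Subgroup.index_eq_one.mp h1
      · exfalso
        rw [h1] at h
        have hrel : H.relIndex K = 1 := by
          have h2 : H.relIndex K * p = 1 * p := by rw [h, one_mul]
          exact Nat.eq_of_mul_eq_mul_right hppos h2
        exact absurd (Subgroup.relIndex_eq_one.mp hrel) (not_le_of_gt hHK)
  haveI hHnorm : H.Normal := Subgroup.NormalizerCondition.normal_of_coatom H (normalizerCondition_of_isNilpotent) hcoatom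
  have hcardQ : Nat.card (G ⧸ H) = p := by rw [← hHidx]; rfl
  haveI : IsCyclic (G ⧸ H) := isCyclic_of_prime_card hcardQ
  letI : CommGroup (G ⧸ H) := IsCyclic.commGroup
  have hG'H : commutator G ≤ H := by
    rw [_root_.commutator_def, Subgroup.commutator_le]
    intro g hg h hgh
    rw [← QuotientGroup.eq_one_iff]
    rw [commutatorElement_def]
    simp only [QuotientGroup.mk_mul, QuotientGroup.mk_inv]
    rw [mul_comm (QuotientGroup.mk g) (QuotientGroup.mk h)]
    group
  have hHleC : H ≤ C := by
    intro h hh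
    exact Subgroup.mem_centralizer_iff.mpr fun x hx => hH x (hG'H hx) h hh
  apply Subgroup.eq_of_le_of_card_ge hHleC
  have hcardH : Nat.card H = p ^ 4 := by
    have h := Subgroup.card_mul_index H
    rw [hHidx, hcard] at h
    have h2 : Nat.card H * p = p ^ 4 * p := by rw [h]; ring
    exact Nat.eq_of_mul_eq_mul_right hppos h2
  rw [hcardH, hcardC]
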